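/- Let V be a finite-dimensional real inner product space, A : V → V a self-adjoint positive semidefinite linear operator, Λ > 0 with ⟨A v, v⟩ ≤ Λ ⟨v, v⟩ for all v ∈ V, and G = id − Λ⁻¹ A. Then for every m ∈ ℕ and every v ∈ V, ‖A (G^m v)‖² ≤ Λ² (1 + m)⁻² ‖v‖². -/

import Mathlib

open scoped RealInnerProductSpace

private lemma richardson_key_scalar (m : ℕ) {x : ℝ} (hx0 : 0 ≤ x) (hx1 : x ≤ 1) :
    x * (1 - x) ^ m * (1 + (m : ℝ)) ≤ 1 := by
  have hy0 : (0 : ℝ) ≤ 1 - x := by linarith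
  have hy1 : (1 : ℝ) - x ≤ 1 := by linarith
  have hsum : ((m : ℝ) + 1) * (1 - x) ^ m ≤ ∑ k ∈ Finset.range (m + 1), (1 - x) ^ k := by
    calc ((m : ℝ) + 1) * (1 - x) ^ m = ∑ _k ∈ Finset.range (m + 1), (1 - x) ^ m := by
          rw [Finset.sum_const, Finset.card_range]; ring
      _ ≤ ∑ k ∈ Finset.range (m + 1), (1 - x) ^ k :=
          Finset.sum_le_sum fun k hk =>
            pow_le_pow_of_le_one hy0 hy1 (Nat.le_of_lt_succ (Finset.mem_range.mp hk))
  have hgeom : ((1 : ℝ) - (1 - x)) * ∑ k ∈ Finset.range (m + 1), (1 - x) ^ k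
      = 1 - (1 - x) ^ (m + 1) := by
    have h := geom_sum_mul (1 - x) (m + 1)
    nlinarith [h]
  have hpow : (0 : ℝ) ≤ (1 - x) ^ (m + 1) := pow_nonneg hy0 _
  calc x * (1 - x) ^ m * (1 + (m : ℝ))
      = ((1 : ℝ) - (1 - x)) * (((m : ℝ) + 1) * (1 - x) ^ m) := by ring
    _ ≤ ((1 : ℝ) - (1 - x)) * ∑ k ∈ Finset.range (m + 1), (1 - x) ^ k :=
        mul_le_mul_of_nonneg_left hsum (by linarith)
    _ = 1 - (1 - x) ^ (m + 1) := hgeom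
    _ ≤ 1 := by linarith

/-- Smoothing property (case `s = 2`, `t = 0`): if `A` is a self-adjoint positive semidefinite
operator on a finite-dimensional real inner product space, `Λ > 0` with
`⟪A v, v⟫ ≤ Λ ⟪v, v⟫` for all `v`, and `G = id - Λ⁻¹ • A`, then
`‖A (G^m v)‖² ≤ Λ² (1 + m)⁻² ‖v‖²` for every `m` and `v`. -/
theorem richardson_smoothing_two_zero
    {V : Type*} [NormedAddCommGroup V] [InnerProductSpace ℝ V] [FiniteDimensional ℝ V]
    (A : V →ₗ[ℝ] V) (hA : LinearMap.IsSymmetric A)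
    (hA_pos : ∀ v : V, 0 ≤ ⟪A v, v⟫)
    (Λ : ℝ) (hΛ : 0 < Λ) (hΛ_ub : ∀ v : V, ⟪A v, v⟫ ≤ Λ * ⟪v, v⟫)
    (G : V →ₗ[ℝ] V) (hG : G = LinearMap.id - Λ⁻¹ • A)
    (m : ℕ) (v : V) :
    ‖A ((G ^ m) v)‖ ^ 2 ≤ Λ ^ 2 * ((1 + (m : ℝ)) ^ 2)⁻¹ * ‖v‖ ^ 2 := by
  have hrank : Module.finrank ℝ V = Module.finrank ℝ V := rfl
  set n := Module.finrank ℝ V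
  set b := hA.eigenvectorBasis hrank with hbdef
  set lam := hA.eigenvalues hrank with hlamdef
  have hb : ∀ i, A (b i) = lam i • b i := fun i => hA.apply_eigenvectorBasis hrank i
  have hnorm : ∀ i, ‖b i‖ = 1 := fun i => b.orthonormal.1 i
  have hinner_self : ∀ i, ⟪b i, b i⟫ = 1 := by
    intro i
    rw [real_inner_self_eq_norm_sq, hnorm i]; norm_num
  have hlam0 : ∀ i, 0 ≤ lam i := by
    intro i
    have h := hA_pos (b i)
    rw [hb i, real_inner_smul_left, hinner_self i, mul_one] at h
    exact h
  have hlamΛ : ∀ i, lam i ≤ Λ := by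
    intro i
    have h := hΛ_ub (b i)
    rw [hb i, real_inner_smul_left, hinner_self i, mul_one, mul_one] at h
    exact h
  -- action of G on eigenvectors
  have hGb : ∀ i, G (b i) = (1 - Λ⁻¹ * lam i) • b i := by
    intro i
    rw [hG]
    simp only [LinearMap.sub_apply, LinearMap.smul_apply, LinearMap.id_apply, hb i,
      smul_smul, sub_smul, one_smul]
  have hGmb : ∀ i k, (G ^ k) (b i) = (1 - Λ⁻¹ * lam i) ^ k • b i := by
    intro i k
    induction k with
    | zero => simp
    | succ k ih =>
      rw [pow_succ', Module.End.mul_apply, ih, map_smul, hGb i, smul_smul, pow_succ']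
      rw [mul_comm]
  -- G is symmetric
  have hGsymm : G.IsSymmetric := by
    intro x y
    rw [hG]
    simp only [LinearMap.sub_apply, LinearMap.smul_apply, LinearMap.id_apply,
      inner_sub_left, inner_sub_right, real_inner_smul_left, real_inner_smul_right, hA x y]
  set μ : Fin n → ℝ := fun i => lam i * (1 - Λ⁻¹ * lam i) ^ m with hμdef
  have hrepr : ∀ i, b.repr (A ((G ^ m) v)) i = μ i * b.repr v i := by
    intro i
    rw [b.repr_apply_apply, b.repr_apply_apply]
    calc ⟪b i, A ((G ^ m) v)⟫ = ⟪A (b i), (G ^ m) v⟫ := (hA _ _).symm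
      _ = lam i * ⟪b i, (G ^ m) v⟫ := by rw [hb i, real_inner_smul_left]
      _ = lam i * ⟪(G ^ m) (b i), v⟫ := by rw [(hGsymm.pow m) (b i) v]
      _ = μ i * ⟪b i, v⟫ := by
          rw [hGmb i m, real_inner_smul_left, hμdef]; ring
  -- norms via coordinates
  have hnorm_sq : ∀ w : V, ‖w‖ ^ 2 = ∑ i, (b.repr w i) ^ 2 := by
    intro w
    rw [← b.repr.norm_map w, EuclideanSpace.norm_eq, Real.sq_sqrt (by positivity)]
    refine Finset.sum_congr rfl fun i _ => ?_
    rw [Real.norm_eq_abs, sq_abs]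
  -- bound each μ i
  have hμ_bound : ∀ i, (μ i) ^ 2 ≤ Λ ^ 2 * ((1 + (m : ℝ)) ^ 2)⁻¹ := by
    intro i
    have hm1 : (0 : ℝ) < 1 + (m : ℝ) := by positivity
    set x := Λ⁻¹ * lam i with hxdef
    have hx0 : 0 ≤ x := mul_nonneg (by positivity) (hlam0 i)
    have hx1 : x ≤ 1 := by
      rw [hxdef, inv_mul_le_iff₀ hΛ, mul_one]
      exact hlamΛ i
    have hkey := richardson_key_scalar m hx0 hx1
    have hμ_eq : μ i = Λ * (x * (1 - x) ^ m) := by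
      rw [hμdef, hxdef]
      field_simp
    have hμ0 : 0 ≤ μ i := by
      rw [hμ_eq]
      have : (0:ℝ) ≤ (1 - x) ^ m := pow_nonneg (by linarith) m
      positivity
    have hμup : μ i ≤ Λ * (1 + (m : ℝ))⁻¹ := by
      rw [hμ_eq]
      have h2 : x * (1 - x) ^ m ≤ (1 + (m : ℝ))⁻¹ := by
        have := (le_div_iff₀ hm1).mpr hkey
        rwa [one_div] at this
      exact mul_le_mul_of_nonneg_left h2 hΛ.le
    calc (μ i) ^ 2 ≤ (Λ * (1 + (m : ℝ))⁻¹) ^ 2 := by nlinarith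
      _ = Λ ^ 2 * ((1 + (m : ℝ)) ^ 2)⁻¹ := by rw [mul_pow, inv_pow]
  -- combine
  rw [hnorm_sq, hnorm_sq v, Finset.mul_sum]
  refine Finset.sum_le_sum fun i _ => ?_
  rw [hrepr i, mul_pow]
  exact mul_le_mul_of_nonneg_right (hμ_bound i) (sq_nonneg _)
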